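/- arXiv:1202.1122 — 2 statements merged into one kernel-verified Lean document; each statement's English description precedes it below -/
import Mathlib

section
/- For the ideal J = ⟨y² + z^a, y z²⟩ in O(C²) with a ≥ 4, every germ of a closed 2-form ω on (C²,0) has algebraic restriction of the form [ω]_J = A·[dy∧dz]_J + B·[z·dy∧dz]_J for some A, B ∈ C; in particular z² dy∧dz has zero algebraic restriction to J. -/
open Filter Topology

set_option maxHeartbeats 1000000
set_option synthInstance.maxHeartbeats 400000

noncomputable section

/-- The space `ℂ^m`. -/
abbrev Cm (m : ℕ) := Fin m → ℂ

/-- Model of the ring of `ℂ`-analytic function-germs at `0` on `ℂ^m`: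
functions that are analytic at `0`. -/
def AnalyticGermRing (m : ℕ) : Subalgebra ℂ (Cm m → ℂ) where
  carrier := {f | AnalyticAt ℂ f 0}
  mul_mem' := fun hf hg => hf.mul hg
  add_mem' := fun hf hg => hf.add hg
  algebraMap_mem' := fun _ => analyticAt_const

/-- `O m` : the ring of analytic function-germs at `0 ∈ ℂ^m` (model). -/
abbrev O (m : ℕ) := AnalyticGermRing m

theorem coord_analyticAt (m : ℕ) (i : Fin m) (x : Cm m) :
    AnalyticAt ℂ (fun y : Cm m => y i) x :=
  (ContinuousLinearMap.proj (R := ℂ) (φ := fun _ : Fin m => ℂ) i).analyticAt x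

/-- The `i`-th coordinate function as an analytic germ. -/
def coordO (m : ℕ) (i : Fin m) : O m := ⟨fun y => y i, coord_analyticAt m i 0⟩

/-- Partial derivative `∂/∂x_i` on analytic germs. -/
def pd {m : ℕ} (i : Fin m) (f : O m) : O m :=
  ⟨fun x => fderiv ℂ (f : Cm m → ℂ) x (Pi.single i 1), by
    have h1 : AnalyticAt ℂ (fderiv ℂ (f : Cm m → ℂ)) 0 := f.2.fderiv
    have h2 := (ContinuousLinearMap.apply ℂ ℂ (Pi.single i 1 : Cm m)).analyticAt
      (fderiv ℂ (f : Cm m → ℂ) 0)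
    exact h2.comp h1⟩

/-- Germs of analytic differential `p`-forms on `ℂ^m`, given by their
coefficient family: `ω J` is the coefficient of `dx_{J 0} ⊗ ⋯ ⊗ dx_{J (p-1)}`. -/
abbrev Form (m p : ℕ) := (Fin p → Fin m) → O m

/-- A form is alternating: coefficients vanish on non-injective indices and are
antisymmetric under permutations. -/
def IsAlt {m p : ℕ} (ω : Form m p) : Prop :=
  (∀ J : Fin p → Fin m, ¬ Function.Injective J → ω J = 0) ∧
  ∀ (J : Fin p → Fin m) (σ : Equiv.Perm (Fin p)),
    ω (J ∘ σ) = ((Equiv.Perm.sign σ : ℤ) : ℂ) • ω J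

/-- Exterior derivative on coefficient families. -/
def extD {m p : ℕ} (ω : Form m p) : Form m (p + 1) :=
  fun J => ∑ i : Fin (p + 1), ((-1 : ℂ) ^ (i : ℕ)) • pd (J i) (ω (J ∘ i.succAbove))

/-- Exterior derivative from degree `p-1` to degree `p` (zero in degree `0`). -/
def dLow {m : ℕ} : {p : ℕ} → Form m (p - 1) → Form m p
  | 0, _ => 0
  | _ + 1, β => extD β

/-- `ω ∈ I·Λ^p`: all coefficients lie in the ideal `I`. -/
def memIF {m p : ℕ} (I : Ideal (O m)) (ω : Form m p) : Prop := ∀ J, ω J ∈ I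

/-- Equality of forms as germs at `0`. -/
def FormEq {m p : ℕ} (ω₁ ω₂ : Form m p) : Prop :=
  ∀ J, ((ω₁ J : Cm m → ℂ)) =ᶠ[𝓝 (0 : Cm m)] (ω₂ J : Cm m → ℂ)

/-- `ω` has zero algebraic restriction to `I`:
`ω = α + dβ` with `α ∈ I·Λ^p`, `β ∈ I·Λ^{p-1}`. -/
def ZeroAR {m p : ℕ} (I : Ideal (O m)) (ω : Form m p) : Prop :=
  ∃ (α : Form m p) (β : Form m (p - 1)),
    memIF I α ∧ memIF I β ∧ FormEq ω (α + dLow β)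

/-- Interior product with a vector field. -/
def iprod {m : ℕ} (X : Fin m → O m) : {p : ℕ} → Form m p → Form m (p - 1)
  | 0, _ => 0
  | _ + 1, ω => fun J => ∑ k : Fin m, X k * ω (Fin.cons k J)

/-- Lie derivative of a form along a vector field (Cartan's formula). -/
def lieD {m p : ℕ} (X : Fin m → O m) (ω : Form m p) : Form m p :=
  dLow (iprod X ω) + (show Form m p from iprod X (extD ω))

/-- Wedge product of forms (on coefficient families, with the usual normalization). -/
def wedge {m p q : ℕ} (ω : Form m p) (γ : Form m q) : Form m (p + q) :=
  ((p.factorial * q.factorial : ℂ))⁻¹ •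
    (fun K => ∑ σ : Equiv.Perm (Fin (p + q)),
      ((Equiv.Perm.sign σ : ℤ) : ℂ) •
        (ω (fun i => K (σ (Fin.castAdd q i))) * γ (fun j => K (σ (Fin.natAdd p j)))))

/-- Coefficient family of the pullback `Φ^*ω` (as plain functions). -/
def pullFunF {k m p : ℕ} (Φ : Cm k → Cm m) (ω : Form m p) :
    (Fin p → Fin k) → Cm k → ℂ :=
  fun J x => ∑ K : Fin p → Fin m,
    (ω K : Cm m → ℂ) (Φ x) *
      ∏ i : Fin p, fderiv ℂ (fun y => Φ y (K i)) x (Pi.single (J i) 1)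

/-- The analytic form `ω'` represents the coefficient family `c` (as germs at `0`). -/
def Represents {k p : ℕ} (ω' : Form k p) (c : (Fin p → Fin k) → Cm k → ℂ) : Prop :=
  ∀ J, (ω' J : Cm k → ℂ) =ᶠ[𝓝 (0 : Cm k)] c J

/-- `Φ^*I = I` : `f ∈ I` iff `f ∘ Φ` is (the germ of) an element of `I`. -/
def PreservesIdeal {m : ℕ} (Φ : Cm m → Cm m) (I : Ideal (O m)) : Prop :=
  ∀ f : O m, f ∈ I ↔
    ∃ g ∈ I, (g : Cm m → ℂ) =ᶠ[𝓝 (0 : Cm m)] fun x => (f : Cm m → ℂ) (Φ x)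

/-- A diffeomorphism-germ of `(ℂ^m, 0)` (model). -/
structure LocalDiffeo (m : ℕ) where
  toFun : Cm m → Cm m
  invFun : Cm m → Cm m
  an : AnalyticAt ℂ toFun 0
  map_zero : toFun 0 = 0
  left_inv : ∀ᶠ x in 𝓝 (0 : Cm m), invFun (toFun x) = x
  right_inv : ∀ᶠ x in 𝓝 (0 : Cm m), toFun (invFun x) = x

/-- The algebraic restrictions `[ω₁]_I` and `[ω₂]_I` are diffeomorphic (via a
diffeomorphism-germ preserving `I`). -/
def ARDiffeomorphic {m p : ℕ} (I : Ideal (O m)) (ω₁ ω₂ : Form m p) : Prop :=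
  ∃ Φ : LocalDiffeo m, PreservesIdeal Φ.toFun I ∧
    ∀ ω' : Form m p, Represents ω' (pullFunF Φ.toFun ω₂) → ZeroAR I (ω' - ω₁)

/-- The Euler vector field `Σ λ_i x_i ∂/∂x_i`. -/
def eulerVF (m : ℕ) (lam : Fin m → ℕ) : Fin m → O m :=
  fun i => ((lam i : ℂ)) • coordO m i

/-- The coordinate `y` on `ℂ²`. -/
def Y : O 2 := coordO 2 0
/-- The coordinate `z` on `ℂ²`. -/
def Z : O 2 := coordO 2 1

/-- The 1-form `g dy + h dz` on `ℂ²`. -/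
def oneF (g h : O 2) : Form 2 1 := fun J => if J 0 = 0 then g else h

/-- The 2-form `f dy ∧ dz` on `ℂ²`. -/
def twoF (f : O 2) : Form 2 2 :=
  fun J => if J 0 = 0 ∧ J 1 = 1 then f else if J 0 = 1 ∧ J 1 = 0 then -f else 0



open scoped NNReal ENNReal

def Qmap : Cm 2 →L[ℂ] Cm 2 :=
  ContinuousLinearMap.pi (fun i : Fin 2 =>
    if i = 0 then 0 else ContinuousLinearMap.proj i)
@[simp] lemma Qmap_apply (x : Cm 2) (i : Fin 2) :
    Qmap x i = if i = 0 then 0 else x i := by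
  simp [Qmap, ContinuousLinearMap.pi_apply]
  split <;> simp
lemma Qmap_norm_le (x : Cm 2) : ‖Qmap x‖ ≤ ‖x‖ := by
  apply pi_norm_le_iff_of_nonneg (norm_nonneg x) |>.2
  intro i
  rw [Qmap_apply]
  split
  · simp
  · exact norm_le_pi_norm x i
lemma Qmap_opNorm_le : ‖Qmap‖ ≤ 1 :=
  ContinuousLinearMap.opNorm_le_bound _ zero_le_one (fun x => by simpa using Qmap_norm_le x)
def e0 : Cm 2 := Pi.single 0 1
lemma e0_norm_le : ‖e0‖ ≤ 1 := by
  apply pi_norm_le_iff_of_nonneg zero_le_one |>.2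
  intro i
  simp [e0, Pi.single_apply]
  split <;> simp
def Tmap (n : ℕ) (p : ContinuousMultilinearMap ℂ (fun _ : Fin (n+1) => Cm 2) ℂ)
    (k : Fin (n+1)) : ContinuousMultilinearMap ℂ (fun _ : Fin n => Cm 2) ℂ :=
  ((p.domDomCongr (Fin.cycleRange k)).curryLeft e0).compContinuousLinearMap
    (fun j : Fin n => if (j : ℕ) < (k : ℕ) then ContinuousLinearMap.id ℂ (Cm 2) else Qmap)
lemma Tmap_norm_le (n : ℕ) (p : ContinuousMultilinearMap ℂ (fun _ : Fin (n+1) => Cm 2) ℂ)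
    (k : Fin (n+1)) : ‖Tmap n p k‖ ≤ ‖p‖ := by
  refine (ContinuousMultilinearMap.norm_compContinuousLinearMap_le _ _).trans ?_
  have h1 : ∏ j : Fin n, ‖if (j : ℕ) < (k : ℕ) then ContinuousLinearMap.id ℂ (Cm 2) else Qmap‖ ≤ 1 := by
    apply Finset.prod_le_one (fun _ _ => norm_nonneg _)
    intro j _
    split
    · exact ContinuousLinearMap.norm_id_le
    · exact Qmap_opNorm_le
  calc ‖(p.domDomCongr (Fin.cycleRange k)).curryLeft e0‖ * _
      ≤ ‖(p.domDomCongr (Fin.cycleRange k)).curryLeft e0‖ * 1 := by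
        apply mul_le_mul_of_nonneg_left h1 (norm_nonneg _)
    _ ≤ ‖p‖ := by
        rw [mul_one]
        refine (ContinuousLinearMap.le_opNorm _ _).trans ?_
        rw [ContinuousMultilinearMap.curryLeft_norm, ContinuousMultilinearMap.norm_domDomCongr]
        calc ‖p‖ * ‖e0‖ ≤ ‖p‖ * 1 := mul_le_mul_of_nonneg_left e0_norm_le (norm_nonneg _)
          _ = ‖p‖ := mul_one _
lemma Tmap_eval (n : ℕ) (p : ContinuousMultilinearMap ℂ (fun _ : Fin (n+1) => Cm 2) ℂ)
    (x : Cm 2) :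
    x 0 * (∑ k : Fin (n+1), Tmap n p k (fun _ => x))
      = p (fun _ => x) - p (fun _ => Qmap x) := by
  set c : ℕ → ℂ := fun j => p (fun i => if (i : ℕ) < j then x else Qmap x) with hc
  have key : ∀ k : Fin (n+1), x 0 * Tmap n p k (fun _ => x) = c ((k : ℕ) + 1) - c (k : ℕ) := by
    intro k
    set u : Fin (n+1) → Cm 2 := fun i => if (i : ℕ) < (k : ℕ) then x else Qmap x with hu
    have hT : Tmap n p k (fun _ => x) = p (Function.update u k e0) := by
      rw [Tmap, ContinuousMultilinearMap.compContinuousLinearMap_apply,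
        ContinuousMultilinearMap.curryLeft_apply, ContinuousMultilinearMap.domDomCongr_apply]
      congr 1
      funext i
      by_cases hik : i = k
      · subst hik
        rw [Fin.cycleRange_self, Function.update_self]
        rfl
      · obtain ⟨j, hj⟩ := Fin.exists_succAbove_eq hik
        rw [← hj, Fin.cycleRange_succAbove, Function.update_of_ne (Fin.succAbove_ne k j)]
        rw [Fin.cons_succ]
        rcases lt_or_ge (Fin.castSucc j) k with h | h
        · rw [Fin.succAbove_of_castSucc_lt _ _ h]
          have hj' : (j : ℕ) < (k : ℕ) := h
          simp only [hu, Fin.coe_castSucc, if_pos hj', if_pos h]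
          rfl
        · rw [Fin.succAbove_of_le_castSucc _ _ h]
          have h' : (k : ℕ) ≤ (j : ℕ) := h
          have h1 : ¬ ((j : ℕ) < (k : ℕ)) := by omega
          have h2 : ¬ ((j.succ : ℕ) < (k : ℕ)) := by rw [Fin.val_succ]; omega
          have h3 : ¬ (j.succ < k) := not_lt.2 (h.trans (Fin.castSucc_lt_succ (i := j)).le)
          simp only [hu, Fin.val_succ, if_neg h1, if_neg h2, if_neg h3]
    have hsm : x 0 * p (Function.update u k e0) = p (Function.update u k (x 0 • e0)) := by
      rw [ContinuousMultilinearMap.map_update_smul]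
      rfl
    have hxQ : x 0 • e0 = x - Qmap x := by
      funext i
      fin_cases i <;> simp [e0, Pi.single_apply]
    have h1 : Function.update u k x = fun i : Fin (n+1) => if (i : ℕ) < (k : ℕ) + 1 then x else Qmap x := by
      funext i
      by_cases hik : i = k
      · subst hik; simp [Function.update_self]
      · rw [Function.update_of_ne hik]
        have hne : (i : ℕ) ≠ (k : ℕ) := fun h => hik (Fin.ext h)
        by_cases hlt : (i : ℕ) < (k : ℕ)
        · simp only [hu, if_pos hlt, if_pos (by omega : (i:ℕ) < (k:ℕ)+1)]
        · simp only [hu, if_neg hlt, if_neg (by omega : ¬ (i:ℕ) < (k:ℕ)+1)]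
    have h2 : Function.update u k (Qmap x) = u := by
      funext i
      by_cases hik : i = k
      · subst hik; simp [Function.update_self, hu]
      · rw [Function.update_of_ne hik]
    have efin : p (fun i : Fin (n+1) => if (i : ℕ) < (k : ℕ) + 1 then x else Qmap x) - p u
        = c ((k:ℕ)+1) - c (k:ℕ) := rfl
    rw [hT, hsm, hxQ, ContinuousMultilinearMap.map_update_sub, h1, h2, efin]
  rw [Finset.mul_sum]
  calc (∑ k : Fin (n+1), x 0 * Tmap n p k (fun _ => x))
      = ∑ k : Fin (n+1), (c ((k:ℕ)+1) - c (k:ℕ)) := Finset.sum_congr rfl (fun k _ => key k)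
    _ = ∑ k ∈ Finset.range (n+1), (c (k+1) - c k) :=
        Fin.sum_univ_eq_sum_range (fun k => c (k+1) - c k) (n+1)
    _ = c (n+1) - c 0 := Finset.sum_range_sub c (n+1)
    _ = p (fun _ => x) - p (fun _ => Qmap x) := by
        have e1 : c (n+1) = p (fun _ => x) := by
          show p _ = p _
          apply congrArg; funext i; rw [if_pos i.isLt]
        have e2 : c 0 = p (fun _ => Qmap x) := by
          show p _ = p _
          apply congrArg; funext i; rw [if_neg (Nat.not_lt_zero _)]
        rw [e1, e2]

theorem div_by_y (f : Cm 2 → ℂ) (hf : AnalyticAt ℂ f 0) :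
    ∃ g : Cm 2 → ℂ, AnalyticAt ℂ g 0 ∧
      ∀ᶠ x in 𝓝 (0 : Cm 2), f x = f (Qmap x) + x 0 * g x := by
  obtain ⟨p, r, hp⟩ := hf
  set q : FormalMultilinearSeries ℂ (Cm 2) ℂ :=
    fun n => ∑ k : Fin (n+1), Tmap n (p (n+1)) k with hq
  have hqn : ∀ n, ‖q n‖ ≤ ((n:ℝ)+1) * ‖p (n+1)‖ := by
    intro n
    calc ‖q n‖ ≤ ∑ k : Fin (n+1), ‖Tmap n (p (n+1)) k‖ := norm_sum_le _ _
      _ ≤ ∑ _k : Fin (n+1), ‖p (n+1)‖ :=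
          Finset.sum_le_sum (fun k _ => Tmap_norm_le n (p (n+1)) k)
      _ = ((n:ℝ)+1) * ‖p (n+1)‖ := by
          simp [Finset.sum_const, Finset.card_univ, nsmul_eq_mul]
  obtain ⟨r', hr'0, hr'⟩ := ENNReal.lt_iff_exists_nnreal_btwn.1 hp.r_pos
  have hr'0' : 0 < r' := by exact_mod_cast hr'0
  have hr'pos : (0:ℝ) < (r' : ℝ) := hr'0'
  obtain ⟨C, hC0, hC⟩ := p.norm_mul_pow_le_of_lt_radius (lt_of_lt_of_le hr' hp.r_le)
  set ρ : ℝ≥0 := r' / 2 with hρdef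
  have hρpos : 0 < ρ := by positivity
  have hρℝ : (ρ : ℝ) = (r' : ℝ) / 2 := by rw [hρdef]; push_cast; ring
  have key : ∀ n, ‖q n‖ * (ρ:ℝ)^n ≤ C / (r' : ℝ) := by
    intro n
    have hpn : ‖p (n+1)‖ * (r':ℝ)^(n+1) ≤ C := hC (n+1)
    have h2 : ((n:ℝ)+1) ≤ 2^n := by
      have : n < 2 ^ n := Nat.lt_two_pow_self
      exact_mod_cast this
    calc ‖q n‖ * (ρ:ℝ)^n ≤ (((n:ℝ)+1) * ‖p (n+1)‖) * (ρ:ℝ)^n :=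
          mul_le_mul_of_nonneg_right (hqn n) (pow_nonneg (NNReal.coe_nonneg ρ) n)
      _ = (((n:ℝ)+1)/2^n) * (‖p (n+1)‖ * (r':ℝ)^n) := by rw [hρℝ, div_pow]; ring
      _ ≤ 1 * (‖p (n+1)‖ * (r':ℝ)^n) := by
          apply mul_le_mul_of_nonneg_right _ (by positivity)
          rw [div_le_one (by positivity)]
          exact h2
      _ = (‖p (n+1)‖ * (r':ℝ)^(n+1)) / (r' : ℝ) := by
          field_simp
          ring
      _ ≤ C / (r' : ℝ) := by gcongr
  have hrad : (ρ : ℝ≥0∞) ≤ q.radius := q.le_radius_of_bound (C / (r':ℝ)) key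
  have hradpos : 0 < q.radius := lt_of_lt_of_le (by exact_mod_cast hρpos) hrad
  have hqb := q.hasFPowerSeriesOnBall hradpos
  refine ⟨q.sum, hqb.analyticAt, ?_⟩
  have hball : Metric.eball (0 : Cm 2) (min (ρ : ℝ≥0∞) r) ∈ 𝓝 (0 : Cm 2) :=
    Metric.eball_mem_nhds _ (lt_min (by exact_mod_cast hρpos) hp.r_pos)
  filter_upwards [hball] with x hx
  rw [Metric.mem_eball, lt_min_iff] at hx
  have hx1 : x ∈ Metric.eball (0 : Cm 2) r := Metric.mem_eball.2 hx.2
  have hxρ : x ∈ Metric.eball (0 : Cm 2) (ρ : ℝ≥0∞) := Metric.mem_eball.2 hx.1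
  have hQx : Qmap x ∈ Metric.eball (0 : Cm 2) r := by
    rw [mem_eball_zero_iff] at hx1 ⊢
    refine lt_of_le_of_lt ?_ hx1
    exact enorm_le_iff_norm_le.2 (Qmap_norm_le x)
  have hs1 : HasSum (fun n => p n fun _ => x) (f x) := by
    have := hp.hasSum (y := x) hx1
    rwa [zero_add] at this
  have hs2 : HasSum (fun n => p n fun _ => Qmap x) (f (Qmap x)) := by
    have := hp.hasSum (y := Qmap x) hQx
    rwa [zero_add] at this
  have hs3 : HasSum (fun n => q n fun _ => x) (q.sum x) :=
    q.hasSum (lt_of_lt_of_le (Metric.mem_eball.1 hxρ) hrad)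
  have hs4 : HasSum (fun n => p (n+1) (fun _ => x) - p (n+1) (fun _ => Qmap x))
      (x 0 * q.sum x) := by
    have := hs3.mul_left (x 0)
    convert this using 1
    · rfl
    funext n
    rw [← Tmap_eval n (p (n+1)) x]
    congr 1
    rw [hq]
    exact (ContinuousMultilinearMap.sum_apply _ _ _).symm
  have hs5 : HasSum (fun n => p n (fun _ => x) - p n (fun _ => Qmap x))
      (f x - f (Qmap x)) := hs1.sub hs2
  have h0 : p 0 (fun _ => x) - p 0 (fun _ => Qmap x) = 0 := by
    have : (fun _ : Fin 0 => x) = (fun _ : Fin 0 => Qmap x) := funext (fun i => i.elim0)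
    rw [this, sub_self]
  have hs6 : HasSum (fun n => p (n+1) (fun _ => x) - p (n+1) (fun _ => Qmap x))
      (f x - f (Qmap x)) := by
    exact (hasSum_nat_add_iff
      (f := fun n => (p n fun _ => x) - p n (fun _ => Qmap x))
      (g := f x - f (Qmap x)) 1).2 (by simpa [h0] using hs5)
  have := hs4.unique hs6
  rw [this]
  ring

lemma sq_factor (φ : ℂ → ℂ) (hφ : AnalyticAt ℂ φ 0) (h0 : φ 0 = 0) (h1 : deriv φ 0 = 0) :
    ∃ ψ : ℂ → ℂ, AnalyticAt ℂ ψ 0 ∧ ∀ t, φ t = t^2 * ψ t := by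
  obtain ⟨pφ, hpφ⟩ := hφ
  have hd1a : AnalyticAt ℂ (dslope φ 0) 0 := ⟨_, hpφ.has_fpower_series_dslope_fslope⟩
  obtain ⟨pd1, hpd1⟩ := hd1a
  have hψa : AnalyticAt ℂ (dslope (dslope φ 0) 0) 0 := ⟨_, hpd1.has_fpower_series_dslope_fslope⟩
  refine ⟨dslope (dslope φ 0) 0, hψa, ?_⟩
  have e1 : ∀ t : ℂ, φ t = t * dslope φ 0 t := by
    intro t
    by_cases ht : t = 0
    · subst ht; simp [h0]
    · rw [dslope_of_ne _ ht, slope_def_field]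
      field_simp [h0]
      rw [h0]; ring
  have e2 : ∀ t : ℂ, dslope φ 0 t = t * dslope (dslope φ 0) 0 t := by
    intro t
    by_cases ht : t = 0
    · subst ht
      rw [dslope_same, h1, mul_comm, mul_zero]
    · conv_rhs => rw [dslope_of_ne _ ht, slope_def_field]
      rw [dslope_same, h1]
      field_simp
      ring
  intro t
  rw [e1 t, e2 t]
  ring

lemma main_decomp (fO : O 2) :
    ∃ s t : O 2, ∀ᶠ x in 𝓝 (0 : Cm 2),
      (fO : Cm 2 → ℂ) x = (fO : Cm 2 → ℂ) 0
        + (fderiv ℂ (fO : Cm 2 → ℂ) 0 (Pi.single 1 1)) * x 1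
        + 2 * x 0 * ((s : O 2) : Cm 2 → ℂ) x + (x 1)^2 * ((t : O 2) : Cm 2 → ℂ) x := by
  set f : Cm 2 → ℂ := (fO : Cm 2 → ℂ) with hfdef
  have hf : AnalyticAt ℂ f 0 := fO.2
  obtain ⟨g, hg, hev⟩ := div_by_y f hf
  set A : ℂ := f 0 with hA
  set B : ℂ := fderiv ℂ f 0 (Pi.single 1 1) with hB
  set e1v : Cm 2 := Pi.single 1 1 with he1v
  set φ : ℂ → ℂ := fun z => f (z • e1v) - (A + B * z) with hφdef
  have hsmul : AnalyticAt ℂ (fun z : ℂ => z • e1v) 0 := by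
    exact ((ContinuousLinearMap.id ℂ ℂ).smulRight e1v).analyticAt 0
  have hφ : AnalyticAt ℂ φ 0 := by
    apply AnalyticAt.sub
    · apply AnalyticAt.comp _ hsmul
      simpa using hf
    · exact analyticAt_const.add (analyticAt_const.mul analyticAt_id)
  have hφ0 : φ 0 = 0 := by simp [hφdef, hA]
  have hφ1 : deriv φ 0 = 0 := by
    have hl : HasDerivAt (fun z : ℂ => z • e1v) e1v 0 := by
      simpa using (hasDerivAt_id (0:ℂ)).smul_const e1v
    have hfd : HasFDerivAt f (fderiv ℂ f 0) ((fun z : ℂ => z • e1v) 0) := by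
      simpa using hf.differentiableAt.hasFDerivAt
    have h1 : HasDerivAt (fun z : ℂ => f (z • e1v)) (fderiv ℂ f 0 e1v) 0 := by
      exact hfd.comp_hasDerivAt (0:ℂ) hl
    have h2 : HasDerivAt (fun z : ℂ => A + B * z) B 0 := by
      simpa using ((hasDerivAt_id (0:ℂ)).const_mul B).const_add A
    have h3 : HasDerivAt φ (fderiv ℂ f 0 e1v - B) 0 := h1.sub h2
    rw [h3.deriv, hB, he1v, sub_self]
  obtain ⟨ψ, hψ, hfact⟩ := sq_factor φ hφ hφ0 hφ1
  have htana : AnalyticAt ℂ (fun x : Cm 2 => ψ (x 1)) 0 :=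
    AnalyticAt.comp (g := ψ) (f := fun y : Cm 2 => y 1) hψ (coord_analyticAt 2 1 0)
  refine ⟨⟨fun x => g x * 2⁻¹, hg.mul analyticAt_const⟩,
    ⟨fun x => ψ (x 1), htana⟩, ?_⟩
  filter_upwards [hev] with x hx
  have hQ : Qmap x = (x 1) • e1v := by
    funext i
    fin_cases i <;> simp [he1v, Pi.single_apply]
  have hfQ : f (Qmap x) = φ (x 1) + (A + B * x 1) := by
    rw [hQ, hφdef]; ring
  rw [hx, hfQ, hfact (x 1)]
  show _ = A + B * x 1 + 2 * x 0 * (g x * 2⁻¹) + (x 1)^2 * ψ (x 1)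
  ring

lemma fin2_cases (v : Fin 2) : v = 0 ∨ v = 1 := by omega

lemma coord_hasFDerivAt (i : Fin 2) (x : Cm 2) :
    HasFDerivAt (fun y : Cm 2 => y i)
      (ContinuousLinearMap.proj (R := ℂ) (φ := fun _ : Fin 2 => ℂ) i) x :=
  (ContinuousLinearMap.proj (R := ℂ) (φ := fun _ : Fin 2 => ℂ) i).hasFDerivAt

lemma pd_zero_coe (i : Fin 2) : ((pd i (0 : O 2) : O 2) : Cm 2 → ℂ) = fun _ => 0 := by
  funext x
  show fderiv ℂ (((0 : O 2) : Cm 2 → ℂ)) x (Pi.single i 1) = 0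
  have h : ((0 : O 2) : Cm 2 → ℂ) = fun _ => (0:ℂ) := rfl
  rw [h, fderiv_fun_const]
  simp

lemma yz2_coe : ((Y * Z^2 : O 2) : Cm 2 → ℂ) = fun y => y 0 * (y 1)^2 := by
  funext y
  simp [Y, Z, coordO]

lemma pd0_yz2 (x : Cm 2) : ((pd 0 (Y * Z^2) : O 2) : Cm 2 → ℂ) x = (x 1)^2 := by
  show fderiv ℂ ((Y * Z^2 : O 2) : Cm 2 → ℂ) x (Pi.single 0 1) = (x 1)^2
  rw [yz2_coe]
  have hD : HasFDerivAt (fun y : Cm 2 => y 0 * (y 1)^2)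
      (x 0 • ((2 * (x 1)^1) • ContinuousLinearMap.proj (R := ℂ) (φ := fun _ : Fin 2 => ℂ) 1)
        + ((x 1)^2) • ContinuousLinearMap.proj (R := ℂ) (φ := fun _ : Fin 2 => ℂ) 0) x :=
    ((coord_hasFDerivAt 0 x).mul ((hasDerivAt_pow 2 (x 1)).comp_hasFDerivAt x (coord_hasFDerivAt 1 x)) :)
  rw [hD.fderiv]
  simp [Pi.single_apply]

lemma pd0_combo (a : ℕ) (sO tO : O 2) :
    ∀ᶠ x in 𝓝 (0 : Cm 2),
      ((pd 0 (sO * (Y^2 + Z^a) + tO * (Y * Z^2)) : O 2) : Cm 2 → ℂ) x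
        = ((pd 0 sO : O 2) : Cm 2 → ℂ) x * ((x 0)^2 + (x 1)^a)
          + 2 * x 0 * ((sO : O 2) : Cm 2 → ℂ) x
          + ((pd 0 tO : O 2) : Cm 2 → ℂ) x * (x 0 * (x 1)^2)
          + (x 1)^2 * ((tO : O 2) : Cm 2 → ℂ) x := by
  have hco : ((sO * (Y^2 + Z^a) + tO * (Y * Z^2) : O 2) : Cm 2 → ℂ)
      = fun y => (sO : Cm 2 → ℂ) y * ((y 0)^2 + (y 1)^a)
          + (tO : Cm 2 → ℂ) y * (y 0 * (y 1)^2) := by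
    funext y
    simp [Y, Z, coordO]
  filter_upwards [sO.2.eventually_analyticAt, tO.2.eventually_analyticAt] with x hs ht
  show fderiv ℂ ((sO * (Y^2 + Z^a) + tO * (Y * Z^2) : O 2) : Cm 2 → ℂ) x (Pi.single 0 1) = _
  rw [hco]
  have hP : HasFDerivAt (fun y : Cm 2 => (y 0)^2 + (y 1)^a)
      ((2 * (x 0)^1) • ContinuousLinearMap.proj (R := ℂ) (φ := fun _ : Fin 2 => ℂ) 0
        + ((a : ℂ) * (x 1)^(a-1)) • ContinuousLinearMap.proj (R := ℂ) (φ := fun _ : Fin 2 => ℂ) 1) x :=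
    (((hasDerivAt_pow 2 (x 0)).comp_hasFDerivAt x (coord_hasFDerivAt 0 x)).add
      ((hasDerivAt_pow a (x 1)).comp_hasFDerivAt x (coord_hasFDerivAt 1 x)) :)
  have hQ2 : HasFDerivAt (fun y : Cm 2 => y 0 * (y 1)^2)
      (x 0 • ((2 * (x 1)^1) • ContinuousLinearMap.proj (R := ℂ) (φ := fun _ : Fin 2 => ℂ) 1)
        + ((x 1)^2) • ContinuousLinearMap.proj (R := ℂ) (φ := fun _ : Fin 2 => ℂ) 0) x :=
    ((coord_hasFDerivAt 0 x).mul ((hasDerivAt_pow 2 (x 1)).comp_hasFDerivAt x (coord_hasFDerivAt 1 x)) :)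
  have hsd : HasFDerivAt ((sO : O 2) : Cm 2 → ℂ) (fderiv ℂ ((sO : O 2) : Cm 2 → ℂ) x) x :=
    hs.differentiableAt.hasFDerivAt
  have htd : HasFDerivAt ((tO : O 2) : Cm 2 → ℂ) (fderiv ℂ ((tO : O 2) : Cm 2 → ℂ) x) x :=
    ht.differentiableAt.hasFDerivAt
  have hbig := (hsd.mul hP).add (htd.mul hQ2)
  rw [(show HasFDerivAt (fun y : Cm 2 => (sO : Cm 2 → ℂ) y * ((y 0)^2 + (y 1)^a)
    + (tO : Cm 2 → ℂ) y * (y 0 * (y 1)^2)) _ x from hbig).fderiv]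
  have e1 : (Pi.single 0 1 : Cm 2) 0 = 1 := by simp
  have e2 : (Pi.single 0 1 : Cm 2) 1 = 0 := by simp [Pi.single_apply]
  have hpd : ∀ (u : O 2), ((pd 0 u : O 2) : Cm 2 → ℂ) x
      = fderiv ℂ ((u : O 2) : Cm 2 → ℂ) x (Pi.single 0 1) := fun _ => rfl
  rw [hpd sO, hpd tO]
  simp only [ContinuousLinearMap.add_apply, ContinuousLinearMap.smul_apply,
    ContinuousLinearMap.proj_apply, e1, e2, smul_eq_mul]
  ring

lemma extD_oneF_apply (G H : O 2) (J : Fin 2 → Fin 2) :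
    extD (oneF G H) J
      = pd (J 0) (if J 1 = 0 then G else H) - pd (J 1) (if J 0 = 0 then G else H) := by
  have h0 : (0:Fin 2).succAbove (0 : Fin 1) = 1 := rfl
  have h1 : (1:Fin 2).succAbove (0 : Fin 1) = 0 := rfl
  show (∑ i : Fin 2, ((-1 : ℂ) ^ (i : ℕ)) • pd (J i) (oneF G H (J ∘ i.succAbove))) = _
  rw [Fin.sum_univ_two]
  have e0 : oneF G H (J ∘ (0:Fin 2).succAbove) = if J 1 = 0 then G else H := by
    show (if (J ∘ (0:Fin 2).succAbove) 0 = 0 then G else H) = _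
    rw [Function.comp_apply, h0]
  have e1 : oneF G H (J ∘ (1:Fin 2).succAbove) = if J 0 = 0 then G else H := by
    show (if (J ∘ (1:Fin 2).succAbove) 0 = 0 then G else H) = _
    rw [Function.comp_apply, h1]
  rw [e0, e1]
  norm_num [sub_eq_add_neg]

lemma twoF_sub (u v : O 2) : twoF u - twoF v = twoF (u - v) := by
  funext J
  simp only [Pi.sub_apply, twoF]
  split_ifs <;> ring

lemma alt_eq_twoF (ω : Form 2 2) (h : IsAlt ω) : ω = twoF (ω ![0,1]) := by
  funext J
  rcases fin2_cases (J 0) with h0 | h0 <;> rcases fin2_cases (J 1) with h1 | h1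
  · have hni : ¬ Function.Injective J := by
      intro hinj
      have := hinj (h0.trans h1.symm)
      simp at this
    rw [h.1 J hni]
    simp [twoF, h0, h1]
  · have hJ : J = ![0,1] := by
      funext i
      rcases fin2_cases i with hi | hi <;> subst hi <;> simpa [h0, h1]
    rw [hJ]
    simp [twoF]
  · have hJ : J = ![0,1] ∘ (Equiv.swap (0 : Fin 2) 1) := by
      funext i
      rcases fin2_cases i with hi | hi <;> subst hi <;>
        simp [h0, h1, Equiv.swap_apply_left, Equiv.swap_apply_right]
    rw [hJ, h.2 ![0,1] (Equiv.swap 0 1)]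
    have hsign : Equiv.Perm.sign (Equiv.swap (0 : Fin 2) 1) = -1 :=
      Equiv.Perm.sign_swap (by decide)
    rw [hsign]
    simp [twoF, Equiv.swap_apply_left, Equiv.swap_apply_right]
  · have hni : ¬ Function.Injective J := by
      intro hinj
      have := hinj (h0.trans h1.symm)
      simp at this
    rw [h.1 J hni]
    simp [twoF, h0, h1]

/-- for `J = ⟨y² + z^a, y z²⟩`, `a ≥ 4`, every closed 2-form has
algebraic restriction `A[dy∧dz] + B[z dy∧dz]`; in particular `z² dy∧dz` has
zero algebraic restriction to `J`. -/
theorem statement_11 (a : ℕ) (ha : 4 ≤ a) :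
    (∀ ω : Form 2 2, IsAlt ω → FormEq (extD ω) 0 →
      ∃ A B : ℂ,
        ZeroAR (Ideal.span {Y ^ 2 + Z ^ a, Y * Z ^ 2}) (ω - twoF (A • 1 + B • Z))) ∧
    ZeroAR (Ideal.span {Y ^ 2 + Z ^ a, Y * Z ^ 2}) (twoF (Z ^ 2)) := by
  have hP : (Y^2 + Z^a : O 2) ∈ Ideal.span {(Y^2 + Z^a : O 2), Y * Z^2} :=
    Ideal.subset_span (Set.mem_insert _ _)
  have hQg : (Y * Z^2 : O 2) ∈ Ideal.span {(Y^2 + Z^a : O 2), Y * Z^2} :=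
    Ideal.subset_span (Set.mem_insert_of_mem _ rfl)
  constructor
  · intro ω halt _
    have hωf := alt_eq_twoF ω halt
    set f₀ : O 2 := ω ![0,1] with hf₀
    obtain ⟨sO, tO, hev⟩ := main_decomp f₀
    refine ⟨(f₀ : Cm 2 → ℂ) 0, fderiv ℂ (f₀ : Cm 2 → ℂ) 0 (Pi.single 1 1), ?_⟩
    set A : ℂ := (f₀ : Cm 2 → ℂ) 0 with hA
    set B : ℂ := fderiv ℂ (f₀ : Cm 2 → ℂ) 0 (Pi.single 1 1) with hB
    set H : O 2 := sO * (Y^2 + Z^a) + tO * (Y * Z^2) with hH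
    refine ⟨twoF (-(pd 0 sO * (Y^2 + Z^a) + pd 0 tO * (Y * Z^2))), oneF 0 H, ?_, ?_, ?_⟩
    · intro K
      have hc : -(pd 0 sO * (Y^2 + Z^a) + pd 0 tO * (Y * Z^2))
          ∈ Ideal.span {(Y^2 + Z^a : O 2), Y * Z^2} :=
        neg_mem (add_mem (Ideal.mul_mem_left _ _ hP) (Ideal.mul_mem_left _ _ hQg))
      show (if K 0 = 0 ∧ K 1 = 1 then _ else if K 0 = 1 ∧ K 1 = 0 then _ else 0) ∈ _
      split_ifs
      · exact hc
      · exact neg_mem hc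
      · exact zero_mem _
    · intro K
      show (if K 0 = 0 then (0:O 2) else H) ∈ _
      split_ifs
      · exact zero_mem _
      · exact add_mem (Ideal.mul_mem_left _ _ hP) (Ideal.mul_mem_left _ _ hQg)
    · have hsub : ω - twoF (A • 1 + B • Z) = twoF (f₀ - (A • 1 + B • Z)) := by
        rw [hωf]; exact twoF_sub _ _
      intro K
      rw [hsub]
      have hdl : (dLow (p := 2) (oneF 0 H)) K
          = pd (K 0) (if K 1 = 0 then 0 else H) - pd (K 1) (if K 0 = 0 then 0 else H) :=
        extD_oneF_apply 0 H K
      rw [Pi.add_apply, hdl]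
      rcases fin2_cases (K 0) with h0 | h0 <;> rcases fin2_cases (K 1) with h1 | h1
      · -- (0,0)
        have e1 : twoF (f₀ - (A • 1 + B • Z)) K = 0 := by simp [twoF, h0, h1]
        have e2 : twoF (-(pd 0 sO * (Y^2 + Z^a) + pd 0 tO * (Y * Z^2))) K = 0 := by
          simp [twoF, h0, h1]
        rw [e1, e2, h0, h1, if_pos (show (0:Fin 2) = 0 from rfl)]
        apply Eventually.of_forall
        intro x
        simp [sub_self]
      · -- (0,1)
        have e1 : twoF (f₀ - (A • 1 + B • Z)) K = f₀ - (A • 1 + B • Z) := by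
          simp [twoF, h0, h1]
        have e2 : twoF (-(pd 0 sO * (Y^2 + Z^a) + pd 0 tO * (Y * Z^2))) K
            = -(pd 0 sO * (Y^2 + Z^a) + pd 0 tO * (Y * Z^2)) := by
          simp [twoF, h0, h1]
        rw [e1, e2, h0, h1]
        rw [if_neg (show ¬ ((1:Fin 2) = 0) by decide), if_pos (show (0:Fin 2) = 0 from rfl)]
        filter_upwards [hev, pd0_combo a sO tO] with x hx hcombo
        have lhs : ((f₀ - (A • 1 + B • Z) : O 2) : Cm 2 → ℂ) x
            = (f₀ : Cm 2 → ℂ) x - (A + B * x 1) := by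
          simp [Z, coordO]
        have rhs : ((-(pd 0 sO * (Y^2 + Z^a) + pd 0 tO * (Y * Z^2))
              + (pd 0 H - pd 1 0) : O 2) : Cm 2 → ℂ) x
            = -(((pd 0 sO : O 2) : Cm 2 → ℂ) x * ((x 0)^2 + (x 1)^a)
                + ((pd 0 tO : O 2) : Cm 2 → ℂ) x * (x 0 * (x 1)^2))
              + (((pd 0 H : O 2) : Cm 2 → ℂ) x - 0) := by
          simp [Y, Z, coordO, pd_zero_coe]
        rw [lhs, rhs, hH, hcombo, hx]
        ring
      · -- (1,0)
        have e1 : twoF (f₀ - (A • 1 + B • Z)) K = -(f₀ - (A • 1 + B • Z)) := by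
          simp [twoF, h0, h1]
        have e2 : twoF (-(pd 0 sO * (Y^2 + Z^a) + pd 0 tO * (Y * Z^2))) K
            = -(-(pd 0 sO * (Y^2 + Z^a) + pd 0 tO * (Y * Z^2))) := by
          simp [twoF, h0, h1]
        rw [e1, e2, h0, h1]
        rw [if_pos (show (0:Fin 2) = 0 from rfl), if_neg (show ¬ ((1:Fin 2) = 0) by decide)]
        filter_upwards [hev, pd0_combo a sO tO] with x hx hcombo
        have lhs : ((-(f₀ - (A • 1 + B • Z)) : O 2) : Cm 2 → ℂ) x
            = -((f₀ : Cm 2 → ℂ) x - (A + B * x 1)) := by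
          simp [Z, coordO]
        have rhs : ((-(-(pd 0 sO * (Y^2 + Z^a) + pd 0 tO * (Y * Z^2)))
              + (pd 1 0 - pd 0 H) : O 2) : Cm 2 → ℂ) x
            = (((pd 0 sO : O 2) : Cm 2 → ℂ) x * ((x 0)^2 + (x 1)^a)
                + ((pd 0 tO : O 2) : Cm 2 → ℂ) x * (x 0 * (x 1)^2))
              + (0 - ((pd 0 H : O 2) : Cm 2 → ℂ) x) := by
          simp [Y, Z, coordO, pd_zero_coe]
        rw [lhs, rhs, hH, hcombo, hx]
        ring
      · -- (1,1)
        have e1 : twoF (f₀ - (A • 1 + B • Z)) K = 0 := by simp [twoF, h0, h1]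
        have e2 : twoF (-(pd 0 sO * (Y^2 + Z^a) + pd 0 tO * (Y * Z^2))) K = 0 := by
          simp [twoF, h0, h1]
        rw [e1, e2, h0, h1, if_neg (show ¬ ((1:Fin 2) = 0) by decide)]
        apply Eventually.of_forall
        intro x
        simp [sub_self]
  · refine ⟨0, oneF 0 (Y * Z^2), ?_, ?_, ?_⟩
    · intro K
      exact zero_mem _
    · intro K
      show (if K 0 = 0 then (0:O 2) else Y * Z^2) ∈ _
      split_ifs
      · exact zero_mem _
      · exact hQg
    · intro K
      have hdl : (dLow (p := 2) (oneF 0 (Y * Z^2))) K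
          = pd (K 0) (if K 1 = 0 then 0 else Y * Z^2)
            - pd (K 1) (if K 0 = 0 then 0 else Y * Z^2) :=
        extD_oneF_apply 0 (Y * Z^2) K
      rw [Pi.add_apply, hdl, Pi.zero_apply]
      rcases fin2_cases (K 0) with h0 | h0 <;> rcases fin2_cases (K 1) with h1 | h1
      · have e1 : twoF (Z^2) K = 0 := by simp [twoF, h0, h1]
        rw [e1, h0, h1, if_pos (show (0:Fin 2) = 0 from rfl)]
        apply Eventually.of_forall
        intro x
        simp [sub_self]
      · have e1 : twoF (Z^2) K = Z^2 := by simp [twoF, h0, h1]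
        rw [e1, h0, h1]
        rw [if_neg (show ¬ ((1:Fin 2) = 0) by decide), if_pos (show (0:Fin 2) = 0 from rfl)]
        apply Eventually.of_forall
        intro x
        have : ((Z^2 : O 2) : Cm 2 → ℂ) x = (x 1)^2 := by simp [Z, coordO]
        rw [this]
        have h2 : ((0 + (pd 0 (Y * Z^2) - pd 1 0) : O 2) : Cm 2 → ℂ) x
            = 0 + (((pd 0 (Y * Z^2) : O 2) : Cm 2 → ℂ) x - 0) := by
          simp [pd_zero_coe]
        rw [h2, pd0_yz2]
        ring
      · have e1 : twoF (Z^2) K = -(Z^2) := by simp [twoF, h0, h1]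
        rw [e1, h0, h1]
        rw [if_pos (show (0:Fin 2) = 0 from rfl), if_neg (show ¬ ((1:Fin 2) = 0) by decide)]
        apply Eventually.of_forall
        intro x
        have hlhs : ((-(Z^2) : O 2) : Cm 2 → ℂ) x = -((x 1)^2) := by simp [Z, coordO]
        rw [hlhs]
        have h2 : ((0 + (pd 1 0 - pd 0 (Y * Z^2)) : O 2) : Cm 2 → ℂ) x
            = 0 + (0 - ((pd 0 (Y * Z^2) : O 2) : Cm 2 → ℂ) x) := by
          simp [pd_zero_coe]
        rw [h2, pd0_yz2]
        ring
      · have e1 : twoF (Z^2) K = 0 := by simp [twoF, h0, h1]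
        rw [e1, h0, h1, if_neg (show ¬ ((1:Fin 2) = 0) by decide)]
        apply Eventually.of_forall
        intro x
        simp [sub_self]
end
end

section
/- Consequence of the homotopy/Moser argument: for J = ⟨y²+z^a, yz²⟩ with a ≥ 4 and any A ≠ 0, B ∈ C, the algebraic restriction [A dy∧dz + B z dy∧dz]_J is diffeomorphic to [A dy∧dz]_J, and by the further linear change (y,z) ↦ (Cy, Dz) with C² = D^a and CD = A it is diffeomorphic to [dy∧dz]_J. -/
open Filter Topology

set_option maxHeartbeats 1000000
set_option synthInstance.maxHeartbeats 400000

noncomputable section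

namespace S13

lemma fin2cases (i : Fin 2) : i = 0 ∨ i = 1 := by revert i; decide

lemma g1val (a : ℕ) : ((Y ^ 2 + Z ^ a : O 2) : Cm 2 → ℂ) = fun x => x 0 ^ 2 + x 1 ^ a := by
  funext x
  simp [Y, Z, coordO]

lemma g2val : ((Y * Z ^ 2 : O 2) : Cm 2 → ℂ) = fun x => x 0 * x 1 ^ 2 := by
  funext x
  simp [Y, Z, coordO]

lemma common_zero (a : ℕ) (ha : 1 ≤ a) (x : Cm 2)
    (h1 : x 0 ^ 2 + x 1 ^ a = 0) (h2 : x 0 * x 1 ^ 2 = 0) : x = 0 := by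
  have hx : x 0 = 0 ∧ x 1 = 0 := by
    rcases mul_eq_zero.1 h2 with h | h
    · refine ⟨h, ?_⟩
      rw [h] at h1
      have h1' : x 1 = 0 ∧ ¬ a = 0 := by simpa using h1
      exact h1'.1
    · have h1' : x 1 = 0 := by
        exact pow_eq_zero_iff (n := 2) (by norm_num) |>.1 h
      refine ⟨?_, h1'⟩
      rw [h1'] at h1
      have : x 0 ^ 2 = 0 := by simpa [zero_pow (by omega : a ≠ 0)] using h1
      exact pow_eq_zero_iff (n := 2) (by norm_num) |>.1 this
  funext i
  rcases fin2cases i with rfl | rfl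
  · exact hx.1
  · exact hx.2

/-- Lemma A: a germ that vanishes near `0` lies in the ideal. -/
lemma mem_of_eventually_zero (a : ℕ) (ha : 1 ≤ a) (f : O 2)
    (hf : (f : Cm 2 → ℂ) =ᶠ[𝓝 (0 : Cm 2)] 0) :
    f ∈ Ideal.span ({Y ^ 2 + Z ^ a, Y * Z ^ 2} : Set (O 2)) := by
  classical
  set g1 : Cm 2 → ℂ := fun x => x 0 ^ 2 + x 1 ^ a with hg1
  set g2 : Cm 2 → ℂ := fun x => x 0 * x 1 ^ 2 with hg2
  set d : Cm 2 → ℂ := fun x => g1 x * (starRingEnd ℂ) (g1 x) + g2 x * (starRingEnd ℂ) (g2 x) with hd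
  set u : Cm 2 → ℂ := fun x => (f : Cm 2 → ℂ) x * (starRingEnd ℂ) (g1 x) / d x with hu
  set v : Cm 2 → ℂ := fun x => (f : Cm 2 → ℂ) x * (starRingEnd ℂ) (g2 x) / d x with hv
  have hu0 : u =ᶠ[𝓝 (0 : Cm 2)] 0 := by
    filter_upwards [hf] with x hx
    simp [hu, hx]
  have hv0 : v =ᶠ[𝓝 (0 : Cm 2)] 0 := by
    filter_upwards [hf] with x hx
    simp [hv, hx]
  have hua : AnalyticAt ℂ u 0 := (analyticAt_const (v := (0:ℂ))).congr hu0.symm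
  have hva : AnalyticAt ℂ v 0 := (analyticAt_const (v := (0:ℂ))).congr hv0.symm
  have key : ∀ x, u x * g1 x + v x * g2 x = (f : Cm 2 → ℂ) x := by
    intro x
    by_cases hx : x = 0
    · subst hx
      have hf0 : (f : Cm 2 → ℂ) 0 = 0 := hf.self_of_nhds
      have : g1 0 = 0 := by simp [hg1, zero_pow (by omega : a ≠ 0)]
      simp [hu, hv, this, hg2, hf0]
    · have hdx : d x ≠ 0 := by
        intro h0
        apply hx
        have h1 : g1 x = 0 ∧ g2 x = 0 := by
          have e1 : g1 x * (starRingEnd ℂ) (g1 x) = Complex.normSq (g1 x) := Complex.mul_conj _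
          have e2 : g2 x * (starRingEnd ℂ) (g2 x) = Complex.normSq (g2 x) := Complex.mul_conj _
          rw [hd] at h0
          simp only at h0
          rw [e1, e2] at h0
          have : ((Complex.normSq (g1 x) + Complex.normSq (g2 x) : ℝ) : ℂ) = 0 := by
            push_cast
            exact h0
          have hre : (Complex.normSq (g1 x) + Complex.normSq (g2 x) : ℝ) = 0 := by
            exact_mod_cast this
          constructor
          · apply Complex.normSq_eq_zero.1
            nlinarith [Complex.normSq_nonneg (g1 x), Complex.normSq_nonneg (g2 x)]
          · apply Complex.normSq_eq_zero.1
            nlinarith [Complex.normSq_nonneg (g1 x), Complex.normSq_nonneg (g2 x)]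
        exact common_zero a ha x h1.1 h1.2
      rw [hu, hv]
      simp only
      rw [div_mul_eq_mul_div, div_mul_eq_mul_div, ← add_div, div_eq_iff hdx, hd]
      ring
  refine Ideal.mem_span_pair.2 ⟨⟨u, hua⟩, ⟨v, hva⟩, ?_⟩
  apply Subtype.ext
  funext x
  have := key x
  simpa [g1val, g2val] using this

lemma mem_of_eventuallyEq (a : ℕ) (ha : 1 ≤ a) (f g : O 2)
    (hg : g ∈ Ideal.span ({Y ^ 2 + Z ^ a, Y * Z ^ 2} : Set (O 2)))
    (h : (f : Cm 2 → ℂ) =ᶠ[𝓝 (0 : Cm 2)] (g : Cm 2 → ℂ)) :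
    f ∈ Ideal.span ({Y ^ 2 + Z ^ a, Y * Z ^ 2} : Set (O 2)) := by
  have hdiff : f - g ∈ Ideal.span ({Y ^ 2 + Z ^ a, Y * Z ^ 2} : Set (O 2)) := by
    apply mem_of_eventually_zero a ha
    filter_upwards [h] with x hx
    simp [hx]
  simpa using Ideal.add_mem _ hg hdiff

end S13
namespace S13

/-- The family of maps `(y,z) ↦ (u(z)·y, v(z)·z)`. -/
def phiMap (u v : ℂ → ℂ) : Cm 2 → Cm 2 := fun x => ![u (x 1) * x 0, v (x 1) * x 1]

lemma phiMap_apply0 (u v : ℂ → ℂ) (x : Cm 2) : phiMap u v x 0 = u (x 1) * x 0 := rfl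
lemma phiMap_apply1 (u v : ℂ → ℂ) (x : Cm 2) : phiMap u v x 1 = v (x 1) * x 1 := rfl

lemma phiMap_zero (u v : ℂ → ℂ) : phiMap u v 0 = 0 := by
  funext i
  rcases fin2cases i with rfl | rfl
  · simp [phiMap_apply0]
  · simp [phiMap_apply1]

lemma phiMap_analytic (u v : ℂ → ℂ) (hu : AnalyticAt ℂ u 0) (hv : AnalyticAt ℂ v 0) :
    AnalyticAt ℂ (phiMap u v) 0 := by
  have hco : AnalyticAt ℂ (fun x : Cm 2 => x 1) 0 := coord_analyticAt 2 1 0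
  have h1 : AnalyticAt ℂ (fun x : Cm 2 => u (x 1) * x 0) 0 := by
    have : AnalyticAt ℂ (fun x : Cm 2 => u (x 1)) 0 :=
      AnalyticAt.comp (f := fun x : Cm 2 => x 1) (g := u) hu hco
    exact this.mul (coord_analyticAt 2 0 0)
  have h2 : AnalyticAt ℂ (fun x : Cm 2 => v (x 1) * x 1) 0 := by
    have : AnalyticAt ℂ (fun x : Cm 2 => v (x 1)) 0 :=
      AnalyticAt.comp (f := fun x : Cm 2 => x 1) (g := v) hv hco
    exact this.mul hco
  have := AnalyticAt.pi (f := fun (i : Fin 2) (x : Cm 2) =>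
      ![(fun x : Cm 2 => u (x 1) * x 0), (fun x : Cm 2 => v (x 1) * x 1)] i x) (e := (0 : Cm 2))
    (fun i => by rcases fin2cases i with rfl | rfl <;> simpa using (by first | exact h1 | exact h2))
  apply this.congr
  apply Filter.Eventually.of_forall
  intro x
  funext i
  rcases fin2cases i with rfl | rfl <;> rfl

lemma comp_analytic (u v : ℂ → ℂ) (hu : AnalyticAt ℂ u 0) (hv : AnalyticAt ℂ v 0) (f : O 2) :
    AnalyticAt ℂ (fun x => (f : Cm 2 → ℂ) (phiMap u v x)) 0 := by
  have h0 : AnalyticAt ℂ (f : Cm 2 → ℂ) (phiMap u v 0) := by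
    rw [phiMap_zero]; exact f.2
  exact h0.comp (phiMap_analytic u v hu hv)

lemma comp_mem (a : ℕ) (u v : ℂ → ℂ) (hu : AnalyticAt ℂ u 0) (hv : AnalyticAt ℂ v 0)
    (huv : ∀ z, u z ^ 2 = v z ^ a) (f : O 2)
    (hf : f ∈ Ideal.span ({Y ^ 2 + Z ^ a, Y * Z ^ 2} : Set (O 2))) :
    (⟨fun x => (f : Cm 2 → ℂ) (phiMap u v x), comp_analytic u v hu hv f⟩ : O 2) ∈
      Ideal.span ({Y ^ 2 + Z ^ a, Y * Z ^ 2} : Set (O 2)) := by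
  obtain ⟨p, q, hpq⟩ := Ideal.mem_span_pair.1 hf
  have hUan : AnalyticAt ℂ (fun x : Cm 2 => u (x 1)) 0 :=
    AnalyticAt.comp (f := fun x : Cm 2 => x 1) (g := u) hu (coord_analyticAt 2 1 0)
  have hVan : AnalyticAt ℂ (fun x : Cm 2 => v (x 1)) 0 :=
    AnalyticAt.comp (f := fun x : Cm 2 => x 1) (g := v) hv (coord_analyticAt 2 1 0)
  set P1 : O 2 := ⟨fun x => (p : Cm 2 → ℂ) (phiMap u v x) * u (x 1) ^ 2,
      ((comp_analytic u v hu hv p)).fun_mul (hUan.fun_pow 2)⟩ with hP1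
  set P2 : O 2 := ⟨fun x => (q : Cm 2 → ℂ) (phiMap u v x) * (u (x 1) * v (x 1) ^ 2),
      ((comp_analytic u v hu hv q)).fun_mul (hUan.fun_mul (hVan.fun_pow 2))⟩ with hP2
  refine Ideal.mem_span_pair.2 ⟨P1, P2, ?_⟩
  apply Subtype.ext
  funext x
  have hfx : ∀ y : Cm 2, (p : Cm 2 → ℂ) y * (y 0 ^ 2 + y 1 ^ a)
      + (q : Cm 2 → ℂ) y * (y 0 * y 1 ^ 2) = (f : Cm 2 → ℂ) y := by
    intro y
    have := congrArg Subtype.val hpq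
    have := congrFun this y
    simpa [g1val, g2val] using this
  have hmain := hfx (phiMap u v x)
  rw [phiMap_apply0, phiMap_apply1] at hmain
  have hval : ((P1 * (Y ^ 2 + Z ^ a) + P2 * (Y * Z ^ 2) : O 2) : Cm 2 → ℂ) x
      = (p : Cm 2 → ℂ) (phiMap u v x) * u (x 1) ^ 2 * (x 0 ^ 2 + x 1 ^ a)
        + (q : Cm 2 → ℂ) (phiMap u v x) * (u (x 1) * v (x 1) ^ 2) * (x 0 * x 1 ^ 2) := by
    simp [hP1, hP2, g1val, g2val]
  rw [hval]
  rw [← hmain]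
  rw [mul_pow (u (x 1)), mul_pow (v (x 1)), ← huv (x 1)]
  ring

lemma preserves_master (a : ℕ) (ha : 1 ≤ a) (u v u' v' : ℂ → ℂ)
    (hu : AnalyticAt ℂ u 0) (hv : AnalyticAt ℂ v 0)
    (hu' : AnalyticAt ℂ u' 0) (hv' : AnalyticAt ℂ v' 0)
    (huv : ∀ z, u z ^ 2 = v z ^ a) (huv' : ∀ z, u' z ^ 2 = v' z ^ a)
    (hright : ∀ᶠ x in 𝓝 (0 : Cm 2), phiMap u v (phiMap u' v' x) = x) :
    PreservesIdeal (phiMap u v) (Ideal.span ({Y ^ 2 + Z ^ a, Y * Z ^ 2} : Set (O 2))) := by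
  intro f
  constructor
  · intro hf
    exact ⟨⟨fun x => (f : Cm 2 → ℂ) (phiMap u v x), comp_analytic u v hu hv f⟩,
      comp_mem a u v hu hv huv f hf, Filter.EventuallyEq.rfl⟩
  · rintro ⟨g, hg, hge⟩
    have h2 := comp_mem a u' v' hu' hv' huv' g hg
    have htend : Filter.Tendsto (phiMap u' v') (𝓝 (0 : Cm 2)) (𝓝 (0 : Cm 2)) := by
      have := (phiMap_analytic u' v' hu' hv').continuousAt
      have h0 := phiMap_zero u' v'
      simpa [ContinuousAt, h0] using this
    have ev1 : ∀ᶠ x in 𝓝 (0 : Cm 2),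
        (g : Cm 2 → ℂ) (phiMap u' v' x) = (f : Cm 2 → ℂ) (phiMap u v (phiMap u' v' x)) :=
      htend.eventually hge
    have ev2 : ∀ᶠ x in 𝓝 (0 : Cm 2),
        (f : Cm 2 → ℂ) (phiMap u v (phiMap u' v' x)) = (f : Cm 2 → ℂ) x := by
      filter_upwards [hright] with x hx
      rw [hx]
    apply mem_of_eventuallyEq a ha f
      ⟨fun x => (g : Cm 2 → ℂ) (phiMap u' v' x), comp_analytic u' v' hu' hv' g⟩ h2
    filter_upwards [ev1, ev2] with x h1 h2'
    exact (h1.trans h2').symm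

end S13
namespace S13

/-- 1-D analytic local inverse of `z ↦ (t0+t1·z)²·z`. -/
lemma zeta_exists (t0 t1 : ℂ) (ht0 : t0 ≠ 0) :
    ∃ ζ : ℂ → ℂ, AnalyticAt ℂ ζ 0 ∧ ζ 0 = 0 ∧
      (∀ᶠ z in 𝓝 (0 : ℂ), ζ ((t0 + t1 * z) ^ 2 * z) = z) ∧
      (∀ᶠ w in 𝓝 (0 : ℂ), (t0 + t1 * ζ w) ^ 2 * ζ w = w) := by
  classical
  set F : ℂ → ℂ := fun z => (t0 + t1 * z) ^ 2 * z with hFdef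
  set g : ℂ → ℂ := fun z => 2 * (t0 + t1 * z) ^ 1 * t1 * z + (t0 + t1 * z) ^ 2 * 1 with hgdef
  have hF : ∀ x : ℂ, HasDerivAt F (g x) x := by
    intro x
    have h1 : HasDerivAt (fun z : ℂ => t0 + t1 * z) t1 x := by
      simpa using ((hasDerivAt_id x).const_mul t1).const_add t0
    have h3 := (h1.fun_pow 2).fun_mul (hasDerivAt_id x)
    simpa [hgdef] using h3
  have hF0 : F 0 = 0 := by simp [hFdef]
  have hg0 : g 0 = t0 ^ 2 := by simp [hgdef]
  have hgne : ∀ x : ℂ, g x = 0 → False → True := fun _ _ _ => trivial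
  have hgcont : Continuous g := by fun_prop
  have hFan : AnalyticAt ℂ F 0 :=
    ((analyticAt_const.add (analyticAt_const.mul analyticAt_id)).pow 2).mul analyticAt_id
  have hstrict : HasStrictDerivAt F (t0 ^ 2) 0 := by
    have h := hFan.hasStrictFDerivAt.hasStrictDerivAt
    have hd : deriv F 0 = t0 ^ 2 := by rw [(hF 0).deriv, hg0]
    rwa [show fderiv ℂ F 0 1 = deriv F 0 from rfl, hd] at h
  have ht02 : (t0 : ℂ) ^ 2 ≠ 0 := pow_ne_zero 2 ht0
  have hS := hstrict.hasStrictFDerivAt_equiv ht02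
  set ζ : ℂ → ℂ := hS.localInverse F _ 0 with hζdef
  have hleft : ∀ᶠ z in 𝓝 (0 : ℂ), ζ (F z) = z := hS.eventually_left_inverse
  have hright : ∀ᶠ w in 𝓝 (0 : ℂ), F (ζ w) = w := by
    have := hS.eventually_right_inverse
    rwa [hF0] at this
  have hζ0 : ζ 0 = 0 := by
    have := hS.localInverse_apply_image
    rwa [hF0] at this
  have hζcont : ContinuousAt ζ 0 := by
    have := hS.localInverse_continuousAt
    rwa [hF0] at this
  -- analyticity of ζ at 0
  set e := hS.toOpenPartialHomeomorph F with hedef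
  have hζe : ζ = e.symm := hS.localInverse_def
  have htargetmem : e.target ∈ 𝓝 (0 : ℂ) := by
    have h1 : F 0 ∈ e.target := hS.image_mem_toOpenPartialHomeomorph_target
    rw [hF0] at h1
    exact e.open_target.mem_nhds h1
  have hUopen : IsOpen {x : ℂ | g x ≠ 0} := isOpen_compl_singleton.preimage hgcont
  have hUmem : {x : ℂ | g x ≠ 0} ∈ 𝓝 (ζ 0) := by
    rw [hζ0]
    exact hUopen.mem_nhds (by simpa [hg0] using ht02)
  have hsmem : e.target ∩ ζ ⁻¹' {x : ℂ | g x ≠ 0} ∈ 𝓝 (0 : ℂ) :=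
    Filter.inter_mem htargetmem (hζcont.preimage_mem_nhds hUmem)
  have hdiff : DifferentiableOn ℂ ζ (e.target ∩ ζ ⁻¹' {x : ℂ | g x ≠ 0}) := by
    rintro w ⟨hw1, hw2⟩
    have hgw : g (e.symm w) ≠ 0 := by rwa [← hζe]
    have hda : HasDerivAt F (g (e.symm w)) (e.symm w) := hF _
    have hFe : HasDerivAt (⇑e) (g (e.symm w)) (e.symm w) := by
      have hcoe : (⇑e : ℂ → ℂ) = F := hS.toOpenPartialHomeomorph_coe
      rw [hcoe]
      exact hda
    have hsymm := e.hasDerivAt_symm hw1 hgw hFe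
    rw [← hζe] at hsymm
    exact hsymm.differentiableAt.differentiableWithinAt
  exact ⟨ζ, hdiff.analyticAt hsmem, hζ0, by simpa [hFdef] using hleft,
    by simpa [hFdef] using hright⟩

end S13
namespace S13

lemma coord_event {p : ℂ → Prop} (h : ∀ᶠ z in 𝓝 (0 : ℂ), p z) :
    ∀ᶠ x in 𝓝 (0 : Cm 2), p (x 1) := by
  have ht : Filter.Tendsto (fun x : Cm 2 => x 1) (𝓝 (0 : Cm 2)) (𝓝 (0 : ℂ)) := by
    have := (continuous_apply (1 : Fin 2)).continuousAt (x := (0 : Cm 2))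
    simpa [ContinuousAt] using this
  exact ht.eventually h

/-- The `t`-family diffeomorphism: `(y,z) ↦ (t(z)^a·y, t(z)²·z)` with `t(z) = t0+t1·z`. -/
lemma t_family (a : ℕ) (ha : 1 ≤ a) (t0 t1 : ℂ) (ht0 : t0 ≠ 0) :
    ∃ Φ : LocalDiffeo 2,
      Φ.toFun = phiMap (fun z => (t0 + t1 * z) ^ a) (fun z => (t0 + t1 * z) ^ 2) ∧
      PreservesIdeal Φ.toFun (Ideal.span ({Y ^ 2 + Z ^ a, Y * Z ^ 2} : Set (O 2))) := by
  classical
  obtain ⟨ζ, hζan, hζ0, hleft, hright⟩ := zeta_exists t0 t1 ht0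
  set u : ℂ → ℂ := fun z => (t0 + t1 * z) ^ a with hudef
  set v : ℂ → ℂ := fun z => (t0 + t1 * z) ^ 2 with hvdef
  set r : ℂ → ℂ := fun w => (t0 + t1 * ζ w)⁻¹ with hrdef
  set u' : ℂ → ℂ := fun w => r w ^ a with hu'def
  set v' : ℂ → ℂ := fun w => r w ^ 2 with hv'def
  have hu_an : AnalyticAt ℂ u 0 :=
    (analyticAt_const.add (analyticAt_const.mul analyticAt_id)).pow a
  have hv_an : AnalyticAt ℂ v 0 :=
    (analyticAt_const.add (analyticAt_const.mul analyticAt_id)).pow 2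
  have hr_an : AnalyticAt ℂ r 0 := by
    have h1 : AnalyticAt ℂ (fun w => t0 + t1 * ζ w) 0 :=
      analyticAt_const.add (analyticAt_const.mul hζan)
    have h2 : (t0 + t1 * ζ 0) ≠ 0 := by rw [hζ0]; simpa using ht0
    exact h1.inv h2
  have hu'_an : AnalyticAt ℂ u' 0 := hr_an.pow a
  have hv'_an : AnalyticAt ℂ v' 0 := hr_an.pow 2
  have huv : ∀ z, u z ^ 2 = v z ^ a := by
    intro z; simp only [hudef, hvdef, ← pow_mul]; ring_nf
  have huv' : ∀ z, u' z ^ 2 = v' z ^ a := by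
    intro z; simp only [hu'def, hv'def, ← pow_mul]; ring_nf
  have evtne : ∀ᶠ w in 𝓝 (0 : ℂ), t0 + t1 * ζ w ≠ 0 := by
    have hcont : ContinuousAt (fun w => t0 + t1 * ζ w) 0 :=
      continuousAt_const.add (continuousAt_const.mul hζan.continuousAt)
    have hval : t0 + t1 * ζ 0 = t0 := by rw [hζ0]; simp
    exact hcont.eventually_ne (by simpa [hval] using ht0)
  have evtne' : ∀ᶠ z in 𝓝 (0 : ℂ), t0 + t1 * z ≠ 0 := by
    have hcont : ContinuousAt (fun z : ℂ => t0 + t1 * z) 0 := by fun_prop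
    exact hcont.eventually_ne (by simpa using ht0)
  have hrightx : ∀ᶠ x in 𝓝 (0 : Cm 2), phiMap u v (phiMap u' v' x) = x := by
    filter_upwards [coord_event (hright.and evtne)] with x hx
    obtain ⟨h1, h2⟩ := hx
    set w := x 1
    have hy1 : phiMap u' v' x 1 = ζ w := by
      rw [phiMap_apply1, hv'def]
      simp only [hrdef]
      rw [inv_pow, inv_mul_eq_iff_eq_mul₀ (pow_ne_zero 2 h2)]
      exact h1.symm
    funext i
    rcases fin2cases i with rfl | rfl
    · rw [phiMap_apply0, hy1, phiMap_apply0]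
      rw [hudef, hu'def, hrdef]
      simp only [inv_pow]
      rw [mul_inv_cancel_left₀ (pow_ne_zero a h2)]
    · rw [phiMap_apply1, hy1, hvdef]
      exact h1
  have hleftx : ∀ᶠ x in 𝓝 (0 : Cm 2), phiMap u' v' (phiMap u v x) = x := by
    filter_upwards [coord_event (hleft.and evtne')] with x hx
    obtain ⟨h1, h2⟩ := hx
    set z := x 1
    have hy1 : phiMap u v x 1 = (t0 + t1 * z) ^ 2 * z := by
      rw [phiMap_apply1, hvdef]
    have hr' : r ((t0 + t1 * z) ^ 2 * z) = (t0 + t1 * z)⁻¹ := by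
      rw [hrdef]; simp only; rw [h1]
    funext i
    rcases fin2cases i with rfl | rfl
    · rw [phiMap_apply0, hy1, phiMap_apply0]
      show r ((t0 + t1 * z) ^ 2 * z) ^ a * ((t0 + t1 * z) ^ a * x 0) = x 0
      rw [hr', inv_pow, inv_mul_cancel_left₀ (pow_ne_zero a h2)]
    · rw [phiMap_apply1, hy1]
      show r ((t0 + t1 * z) ^ 2 * z) ^ 2 * ((t0 + t1 * z) ^ 2 * z) = z
      rw [hr', inv_pow, inv_mul_cancel_left₀ (pow_ne_zero 2 h2)]
  refine ⟨⟨phiMap u v, phiMap u' v', phiMap_analytic u v hu_an hv_an, phiMap_zero u v,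
    hleftx, hrightx⟩, rfl, ?_⟩
  exact preserves_master a ha u v u' v' hu_an hv_an hu'_an hv'_an huv huv' hrightx
end S13
namespace S13

lemma sum_fin2fun (F : (Fin 2 → Fin 2) → ℂ) :
    ∑ K : Fin 2 → Fin 2, F K = F ![0,0] + F ![0,1] + F ![1,0] + F ![1,1] := by
  rw [show (Finset.univ : Finset (Fin 2 → Fin 2)) = {![0,0], ![0,1], ![1,0], ![1,1]} by decide]
  rw [Finset.sum_insert (by decide), Finset.sum_insert (by decide),
    Finset.sum_insert (by decide), Finset.sum_singleton]
  ring

private abbrev P2 (i : Fin 2) : Cm 2 →L[ℂ] ℂ :=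
  ContinuousLinearMap.proj (R := ℂ) (φ := fun _ : Fin 2 => ℂ) i

lemma hasFDeriv_coord (i : Fin 2) (x : Cm 2) :
    HasFDerivAt (fun y : Cm 2 => y i) (P2 i) x := (P2 i).hasFDerivAt

lemma fderiv_phi0 (u v u' : ℂ → ℂ) (hud : ∀ z, HasDerivAt u (u' z) z) (x : Cm 2) (j : Fin 2) :
    fderiv ℂ (fun y : Cm 2 => phiMap u v y 0) x (Pi.single j 1)
      = if j = 0 then u (x 1) else u' (x 1) * x 0 := by
  have hA : HasFDerivAt (fun y : Cm 2 => u (y 1)) (u' (x 1) • P2 1) x :=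
    HasDerivAt.comp_hasFDerivAt x (hud (x 1)) (hasFDeriv_coord 1 x)
  have hAB := hA.fun_mul (hasFDeriv_coord 0 x)
  have hfun : (fun y : Cm 2 => phiMap u v y 0) = fun y : Cm 2 => u (y 1) * y 0 := rfl
  rw [hfun, hAB.fderiv]
  rcases fin2cases j with rfl | rfl
  · simp [Pi.single_eq_same, Pi.single_eq_of_ne]
  · simp [Pi.single_eq_same, Pi.single_eq_of_ne]
    ring

lemma fderiv_phi1 (u v v' : ℂ → ℂ) (hvd : ∀ z, HasDerivAt v (v' z) z) (x : Cm 2) (j : Fin 2) :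
    fderiv ℂ (fun y : Cm 2 => phiMap u v y 1) x (Pi.single j 1)
      = if j = 0 then 0 else v (x 1) + x 1 * v' (x 1) := by
  have hA : HasFDerivAt (fun y : Cm 2 => v (y 1)) (v' (x 1) • P2 1) x :=
    HasDerivAt.comp_hasFDerivAt x (hvd (x 1)) (hasFDeriv_coord 1 x)
  have hAB := hA.fun_mul (hasFDeriv_coord 1 x)
  have hfun : (fun y : Cm 2 => phiMap u v y 1) = fun y : Cm 2 => v (y 1) * y 1 := rfl
  rw [hfun, hAB.fderiv]
  rcases fin2cases j with rfl | rfl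
  · simp [Pi.single_eq_same, Pi.single_eq_of_ne]
  · simp [Pi.single_eq_same, Pi.single_eq_of_ne]

lemma pull_formula (u v u' v' : ℂ → ℂ) (hud : ∀ z, HasDerivAt u (u' z) z)
    (hvd : ∀ z, HasDerivAt v (v' z) z) (f2 : O 2) (J : Fin 2 → Fin 2) (x : Cm 2) :
    pullFunF (phiMap u v) (twoF f2) J x
      = (f2 : Cm 2 → ℂ) (phiMap u v x) *
        ((if J 0 = 0 then u (x 1) else u' (x 1) * x 0)
            * (if J 1 = 0 then 0 else v (x 1) + x 1 * v' (x 1))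
          - (if J 0 = 0 then 0 else v (x 1) + x 1 * v' (x 1))
            * (if J 1 = 0 then u (x 1) else u' (x 1) * x 0)) := by
  unfold pullFunF
  rw [sum_fin2fun]
  have e00 : (twoF f2 ![0,0] : Cm 2 → ℂ) = 0 := by
    simp [twoF]
  have e11 : (twoF f2 ![1,1] : Cm 2 → ℂ) = 0 := by
    simp [twoF]
  have e01 : (twoF f2 ![0,1] : Cm 2 → ℂ) = (f2 : Cm 2 → ℂ) := by
    simp [twoF]
  have e10 : (twoF f2 ![1,0] : Cm 2 → ℂ) = -(f2 : Cm 2 → ℂ) := by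
    simp [twoF]
  rw [Fin.prod_univ_two, Fin.prod_univ_two, Fin.prod_univ_two, Fin.prod_univ_two]
  simp only [Matrix.cons_val_zero, Matrix.cons_val_one, Matrix.head_cons]
  rw [e00, e01, e10, e11]
  rw [fderiv_phi0 u v u' hud x (J 0), fderiv_phi0 u v u' hud x (J 1),
    fderiv_phi1 u v v' hvd x (J 0), fderiv_phi1 u v v' hvd x (J 1)]
  simp only [Pi.zero_apply, Pi.neg_apply]
  ring

end S13
namespace S13

lemma succAbove00 : (0 : Fin 2).succAbove (0 : Fin 1) = 1 := by decide
lemma succAbove10 : (1 : Fin 2).succAbove (0 : Fin 1) = 0 := by decide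

lemma fderiv_zeroO (i : Fin 2) (x : Cm 2) :
    fderiv ℂ ((0 : O 2) : Cm 2 → ℂ) x (Pi.single i 1) = 0 := by
  have : ((0 : O 2) : Cm 2 → ℂ) = fun _ => (0 : ℂ) := rfl
  rw [this]
  simp

lemma zeroAR_of_key (a : ℕ) (E : ℂ) (V : Polynomial ℂ) (f2 : O 2) (u v u' v' : ℂ → ℂ)
    (hud : ∀ z, HasDerivAt u (u' z) z) (hvd : ∀ z, HasDerivAt v (v' z) z)
    (key : ∀ x : Cm 2, (f2 : Cm 2 → ℂ) (phiMap u v x) * (u (x 1) * (v (x 1) + x 1 * v' (x 1)))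
        = E + x 1 ^ 2 * V.eval (x 1))
    (ω' : Form 2 2) (hrep : Represents ω' (pullFunF (phiMap u v) (twoF f2))) :
    ZeroAR (Ideal.span ({Y ^ 2 + Z ^ a, Y * Z ^ 2} : Set (O 2))) (ω' - twoF (E • 1)) := by
  classical
  have hVan : AnalyticAt ℂ (fun s : ℂ => V.eval s) 0 := (V.differentiable.analyticAt 0)
  have hWan : AnalyticAt ℂ (fun x : Cm 2 => V.eval (x 1)) 0 :=
    AnalyticAt.comp (f := fun x : Cm 2 => x 1) (g := fun s => V.eval s) hVan
      (coord_analyticAt 2 1 0)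
  set hb : O 2 := ⟨fun x : Cm 2 => V.eval (x 1) * (x 0 * x 1 ^ 2),
    hWan.fun_mul ((coord_analyticAt 2 0 0).fun_mul ((coord_analyticAt 2 1 0).fun_pow 2))⟩ with hbdef
  -- pd computations for hb
  have pd_hb0 : ∀ x : Cm 2, fderiv ℂ (hb : Cm 2 → ℂ) x (Pi.single (0 : Fin 2) 1)
      = V.eval (x 1) * x 1 ^ 2 := by
    intro x
    have hA : HasFDerivAt (fun y : Cm 2 => V.eval (y 1)) ((V.derivative.eval (x 1)) • P2 1) x :=
      HasDerivAt.comp_hasFDerivAt (h₂ := fun s => V.eval s) x (V.hasDerivAt (x 1)) (hasFDeriv_coord 1 x)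
    have hB2 : HasFDerivAt (fun y : Cm 2 => y 1 ^ 2) (((2 : ℕ) * x 1 ^ (2-1)) • P2 1) x :=
      HasDerivAt.comp_hasFDerivAt (h₂ := fun s : ℂ => s ^ 2) x (hasDerivAt_pow 2 (x 1)) (hasFDeriv_coord 1 x)
    have hB := (hasFDeriv_coord 0 x).fun_mul hB2
    have htot := hA.fun_mul hB
    have hfun : (hb : Cm 2 → ℂ) = fun y : Cm 2 => V.eval (y 1) * (y 0 * y 1 ^ 2) := rfl
    rw [hfun, htot.fderiv]
    simp [Pi.single_eq_same, Pi.single_eq_of_ne]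
  -- the 1-form β
  set β : Form 2 1 := oneF 0 hb with hβdef
  have hmemβ : memIF (Ideal.span ({Y ^ 2 + Z ^ a, Y * Z ^ 2} : Set (O 2))) β := by
    intro J'
    rw [hβdef]
    unfold oneF
    by_cases h : J' 0 = 0
    · simp [h]
    · simp [h]
      have heq : hb = (⟨fun x : Cm 2 => V.eval (x 1), hWan⟩ : O 2) * (Y * Z ^ 2) := by
        apply Subtype.ext
        funext x
        have : ((Y * Z ^ 2 : O 2) : Cm 2 → ℂ) x = x 0 * x 1 ^ 2 := by rw [g2val]
        show V.eval (x 1) * (x 0 * x 1 ^ 2) = _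
        rw [show (((⟨fun x : Cm 2 => V.eval (x 1), hWan⟩ : O 2) * (Y * Z ^ 2) : O 2) : Cm 2 → ℂ) x
            = V.eval (x 1) * ((Y * Z ^ 2 : O 2) : Cm 2 → ℂ) x from rfl, this]
      rw [heq]
      exact Ideal.mul_mem_left _ _ (Ideal.subset_span (by simp))
  refine ⟨0, β, fun J => by simp, hmemβ, ?_⟩
  intro J
  -- identify RHS with extD β J
  have hR : (0 + dLow (m := 2) (p := 2) β) J = extD β J := by
    rw [zero_add]
    rfl
  rw [hR]
  -- extD β J as a sum of two terms
  have hext : extD β J = ((-1 : ℂ) ^ ((0 : Fin 2) : ℕ)) • pd (J 0) (β (J ∘ (0 : Fin 2).succAbove))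
      + ((-1 : ℂ) ^ ((1 : Fin 2) : ℕ)) • pd (J 1) (β (J ∘ (1 : Fin 2).succAbove)) := by
    unfold extD
    rw [Fin.sum_univ_two]
  have hβ0 : β (J ∘ (0 : Fin 2).succAbove) = (if J 1 = 0 then 0 else hb) := by
    rw [hβdef]
    unfold oneF
    have : (J ∘ (0 : Fin 2).succAbove) 0 = J 1 := by
      show J ((0 : Fin 2).succAbove 0) = J 1
      rw [succAbove00]
    rw [this]
  have hβ1 : β (J ∘ (1 : Fin 2).succAbove) = (if J 0 = 0 then 0 else hb) := by
    rw [hβdef]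
    unfold oneF
    have : (J ∘ (1 : Fin 2).succAbove) 0 = J 0 := by
      show J ((1 : Fin 2).succAbove 0) = J 0
      rw [succAbove10]
    rw [this]
  -- the eventual equality
  have hsub : ((ω' - twoF (E • 1)) J) = ω' J - twoF (E • 1) J := rfl
  rw [hsub]
  filter_upwards [hrep J] with x hx
  have hcoe : ((ω' J - twoF (E • 1) J : O 2) : Cm 2 → ℂ) x
      = (ω' J : Cm 2 → ℂ) x - ((twoF (E • 1) J : O 2) : Cm 2 → ℂ) x := by
    simp
  rw [hcoe, hx, pull_formula u v u' v' hud hvd f2 J x]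
  have hcoe2 : ((extD β J : O 2) : Cm 2 → ℂ) x
      = (pd (J 0) (β (J ∘ (0 : Fin 2).succAbove)) : Cm 2 → ℂ) x
        - (pd (J 1) (β (J ∘ (1 : Fin 2).succAbove)) : Cm 2 → ℂ) x := by
    rw [hext]
    push_cast
    simp
    ring
  have htwoF : ((twoF (E • 1) J : O 2) : Cm 2 → ℂ) x
      = if J 0 = 0 ∧ J 1 = 1 then E else if J 0 = 1 ∧ J 1 = 0 then -E else 0 := by
    unfold twoF
    by_cases h1 : J 0 = 0 ∧ J 1 = 1
    · simp [h1]
    · by_cases h2 : J 0 = 1 ∧ J 1 = 0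
      · simp [h1, h2]
      · simp [h1, h2]
  rw [hcoe2, hβ0, hβ1, htwoF]
  have pd_val : ∀ (i : Fin 2) (f : O 2), ((pd i f : O 2) : Cm 2 → ℂ) x
      = fderiv ℂ (f : Cm 2 → ℂ) x (Pi.single i 1) := fun _ _ => rfl
  have d10 : ((1 : Fin 2) = 0) = False := by simp
  have d01 : ((0 : Fin 2) = 1) = False := by simp [Fin.ext_iff]
  rcases fin2cases (J 0) with hJ0 | hJ0 <;> rcases fin2cases (J 1) with hJ1 | hJ1 <;>
      rw [hJ0, hJ1] <;>
      simp only [pd_val, d10, d01, if_true, if_false, eq_self_iff_true, true_and, and_true,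
        false_and, and_false, ite_true, ite_false, fderiv_zeroO, pd_hb0] <;>
      try ring
  · -- J = (0,1)
    linear_combination key x
  · -- J = (1,0)
    linear_combination -(key x)

end S13
namespace S13

open Polynomial in
lemma poly_factor (a : ℕ) (ha4 : 4 ≤ a) (Ac Bc E t0 : ℂ) (hA : Ac ≠ 0) (ht0 : t0 ≠ 0)
    (hE : Ac * t0 ^ (a + 2) = E) :
    ∃ t1 : ℂ, ∃ V : Polynomial ℂ, ∀ z : ℂ,
      (Ac + Bc * ((t0 + t1 * z) ^ 2 * z)) *
          ((t0 + t1 * z) ^ a * ((t0 + t1 * z) ^ 2 + z * ((t0 + t1 * z) * (2 * t1))))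
        = E + z ^ 2 * V.eval z := by
  classical
  obtain ⟨k, rfl⟩ : ∃ k, a = k + 4 := ⟨a - 4, by omega⟩
  have ha48 : ((k : ℂ) + 4 + 4) ≠ 0 := by
    have h8 : ((k : ℂ) + 4 + 4) = ((k + 8 : ℕ) : ℂ) := by push_cast; ring
    rw [h8]
    exact Nat.cast_ne_zero.2 (by omega)
  set t1 : ℂ := -(Bc * t0 ^ 3) / (((k : ℂ) + 4 + 4) * Ac) with ht1
  set T : Polynomial ℂ := C t0 + C t1 * X with hT
  set W : Polynomial ℂ :=
    (C Ac + C Bc * (T ^ 2 * X)) * (T ^ (k + 4) * (T ^ 2 + X * (T * C (2 * t1)))) - C E with hW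
  have heval : ∀ z : ℂ, W.eval z =
      (Ac + Bc * ((t0 + t1 * z) ^ 2 * z)) *
        ((t0 + t1 * z) ^ (k + 4) * ((t0 + t1 * z) ^ 2 + z * ((t0 + t1 * z) * (2 * t1)))) - E := by
    intro z
    simp [hW, hT]
  have hW0 : W.eval 0 = 0 := by
    rw [heval 0]
    simp only [mul_zero, add_zero, zero_mul]
    rw [← hE]
    ring
  have hWd0 : W.derivative.eval 0 = 0 := by
    have hTd : T.derivative = C t1 := by
      rw [hT]
      simp
    rw [hW]
    simp only [derivative_sub, derivative_C, derivative_mul, derivative_add, derivative_pow,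
      hTd, derivative_X]
    simp only [eval_sub, eval_add, eval_mul, eval_pow, eval_C, eval_X, hT]
    simp only [mul_zero, add_zero, zero_mul, zero_add, mul_one, sub_zero, eval_add, eval_mul,
      eval_C, eval_X, eval_pow, mul_zero, add_zero]
    -- now a scalar identity in t0, t1
    simp only [eval_zero, eval_one, show k + 4 - 1 = k + 3 by omega]
    rw [ht1]
    field_simp
    push_cast
    ring
  obtain ⟨W1, hW1⟩ : (X : Polynomial ℂ) ∣ W := X_dvd_iff.2 (by
    rwa [coeff_zero_eq_eval_zero])
  have hW10 : W1.eval 0 = 0 := by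
    have hd : W.derivative = W1 + X * W1.derivative := by
      rw [hW1]
      simp [derivative_mul]
    have := hWd0
    rw [hd] at this
    simpa using this
  obtain ⟨V, hV⟩ : (X : Polynomial ℂ) ∣ W1 := X_dvd_iff.2 (by rwa [coeff_zero_eq_eval_zero])
  refine ⟨t1, V, fun z => ?_⟩
  have : W.eval z = z ^ 2 * V.eval z := by
    rw [hW1, hV]
    simp [eval_mul]
    ring
  rw [heval z] at this
  linear_combination this
end S13
namespace S13

lemma f2val (A B : ℂ) : ((A • 1 + B • Z : O 2) : Cm 2 → ℂ) = fun y => A + B * y 1 := by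
  funext y
  simp [Z, coordO]

lemma part13 (a : ℕ) (ha : 4 ≤ a) (A B E t0 : ℂ) (hA : A ≠ 0) (ht0 : t0 ≠ 0)
    (hE : A * t0 ^ (a + 2) = E) :
    ARDiffeomorphic (Ideal.span ({Y ^ 2 + Z ^ a, Y * Z ^ 2} : Set (O 2)))
      (twoF (E • 1)) (twoF (A • 1 + B • Z)) := by
  obtain ⟨t1, V, key⟩ := poly_factor a ha A B E t0 hA ht0 hE
  obtain ⟨Φ, hΦeq, hpres⟩ := t_family a (by omega) t0 t1 ht0
  refine ⟨Φ, hpres, ?_⟩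
  intro ω' hrep
  rw [hΦeq] at hrep
  have hlin : ∀ z : ℂ, HasDerivAt (fun w : ℂ => t0 + t1 * w) t1 z := by
    intro z
    simpa using ((hasDerivAt_id z).const_mul t1).const_add t0
  have hud : ∀ z : ℂ, HasDerivAt (fun w => (t0 + t1 * w) ^ a)
      ((a : ℂ) * (t0 + t1 * z) ^ (a - 1) * t1) z := fun z => (hlin z).pow a
  have hvd : ∀ z : ℂ, HasDerivAt (fun w => (t0 + t1 * w) ^ 2)
      ((2 : ℂ) * (t0 + t1 * z) ^ (2 - 1) * t1) z := by
    intro z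
    have := (hlin z).fun_pow 2
    simpa using this
  apply zeroAR_of_key a E V (A • 1 + B • Z) _ _ _ _ hud hvd ?_ ω' hrep
  intro x
  rw [f2val A B]
  simp only [phiMap_apply1, pow_one]
  have hk := key (x 1)
  linear_combination hk

end S13

/-- for `J = ⟨y²+z^a, yz²⟩`, `a ≥ 4`, `A ≠ 0`:
`[A dy∧dz + B z dy∧dz]_J` is diffeomorphic to `[A dy∧dz]_J`; by the linear
change `(y,z) ↦ (Cy, Dz)` with `C² = D^a`, `CD = A` the restriction
`[A dy∧dz]_J` is diffeomorphic to `[dy∧dz]_J`; hence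
`[A dy∧dz + B z dy∧dz]_J` is diffeomorphic to `[dy∧dz]_J`. -/
theorem statement_13 (a : ℕ) (ha : 4 ≤ a) (A B : ℂ) (hA : A ≠ 0) :
    ARDiffeomorphic (Ideal.span {Y ^ 2 + Z ^ a, Y * Z ^ 2})
      (twoF (A • 1)) (twoF (A • 1 + B • Z)) ∧
    (∀ C D : ℂ, C ^ 2 = D ^ a → C * D = A →
      PreservesIdeal (fun x : Cm 2 => ![C * x 0, D * x 1])
        (Ideal.span {Y ^ 2 + Z ^ a, Y * Z ^ 2}) ∧
      ∀ ω' : Form 2 2,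
        Represents ω' (pullFunF (fun x : Cm 2 => ![C * x 0, D * x 1]) (twoF 1)) →
        ZeroAR (Ideal.span {Y ^ 2 + Z ^ a, Y * Z ^ 2}) (ω' - twoF (A • 1))) ∧
    ARDiffeomorphic (Ideal.span {Y ^ 2 + Z ^ a, Y * Z ^ 2})
      (twoF 1) (twoF (A • 1 + B • Z)) := by
  refine ⟨?_, ?_, ?_⟩
  · -- Part 1
    exact S13.part13 a ha A B A 1 hA one_ne_zero (by simp)
  · -- Part 2
    intro C D hCD hCDA
    have hC : C ≠ 0 := left_ne_zero_of_mul (hCDA ▸ hA)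
    have hD : D ≠ 0 := right_ne_zero_of_mul (hCDA ▸ hA)
    have hmap : (fun x : Cm 2 => ![C * x 0, D * x 1])
        = S13.phiMap (fun _ => C) (fun _ => D) := rfl
    constructor
    · rw [hmap]
      apply S13.preserves_master a (by omega) (fun _ => C) (fun _ => D)
        (fun _ => C⁻¹) (fun _ => D⁻¹) analyticAt_const analyticAt_const
        analyticAt_const analyticAt_const (fun _ => hCD)
        (fun _ => by simp [inv_pow, hCD])
      apply Filter.Eventually.of_forall
      intro x
      funext i
      rcases S13.fin2cases i with rfl | rfl
      · rw [S13.phiMap_apply0, S13.phiMap_apply0, mul_inv_cancel_left₀ hC]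
      · rw [S13.phiMap_apply1, S13.phiMap_apply1, mul_inv_cancel_left₀ hD]
    · intro ω' hrep
      rw [hmap] at hrep
      apply S13.zeroAR_of_key a A 0 1 (fun _ => C) (fun _ => D) (fun _ => 0) (fun _ => 0)
        (fun z => hasDerivAt_const z C) (fun z => hasDerivAt_const z D) ?_ ω' hrep
      intro x
      have h1 : ((1 : O 2) : Cm 2 → ℂ) (S13.phiMap (fun _ => C) (fun _ => D) x) = 1 := rfl
      rw [h1]
      simp [hCDA]
  · -- Part 3
    set t0 : ℂ := Complex.exp (-(Complex.log A) / ((a : ℂ) + 2)) with ht0def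
    have ht0 : t0 ≠ 0 := Complex.exp_ne_zero _
    have ha2 : ((a : ℂ) + 2) ≠ 0 := by
      have h8 : ((a : ℂ) + 2) = ((a + 2 : ℕ) : ℂ) := by push_cast; ring
      rw [h8]
      exact Nat.cast_ne_zero.2 (by omega)
    have hE : A * t0 ^ (a + 2) = 1 := by
      rw [ht0def, ← Complex.exp_nat_mul]
      have : ((a + 2 : ℕ) : ℂ) * (-(Complex.log A) / ((a : ℂ) + 2)) = -(Complex.log A) := by
        push_cast
        field_simp
      rw [this, Complex.exp_neg, Complex.exp_log hA, mul_inv_cancel₀ hA]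
    have := S13.part13 a ha A B 1 t0 hA ht0 hE
    rwa [one_smul] at this
end
end
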